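/- Let {A_n} be a sequence of n×n symmetric matrices with nonnegative entries and zeros on the diagonal satisfying (BD) and (MF), fix (β, B) ∈ Θ, and let X be an observation from P_{n,β,B}. With f_n(y) := (β/2) yᵀ A_n y + B Σ_{i=1}^n y_i for y ∈ [−1,1]^n and b_i(x) := tanh(β m_i(x) + B), one has limsup_{n→∞} (1/n²) E[ (f_n(X) − f_n(b(X)))² ] = 0, where E denotes expectation under P_{n,β,B}. -/

import Mathlib

open Filter

noncomputable section

/-- Spin configuration in `{-1,1}^n` encoded by a Boolean vector. -/
def spinVec (n : ℕ) (σ : Fin n → Bool) : Fin n → ℝ := fun i => if σ i then 1 else -1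

/-- Local field `m_i(x) = ∑_j A i j * x j`. -/
def mloc {n : ℕ} (A : Matrix (Fin n) (Fin n) ℝ) (x : Fin n → ℝ) (i : Fin n) : ℝ :=
  ∑ j, A i j * x j

/-- Average local field `m̄(x)`. -/
def mbar {n : ℕ} (A : Matrix (Fin n) (Fin n) ℝ) (x : Fin n → ℝ) : ℝ :=
  (1 / (n : ℝ)) * ∑ i, mloc A x i

/-- `T_n(x) = (1/n) ∑_i (m_i(x) - m̄(x))²`. -/
def Tstat {n : ℕ} (A : Matrix (Fin n) (Fin n) ℝ) (x : Fin n → ℝ) : ℝ :=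
  (1 / (n : ℝ)) * ∑ i, (mloc A x i - mbar A x) ^ 2

/-- Unnormalized Ising weight `exp((β/2) xᵀAx + B ∑ x_i)`. -/
def isingWt {n : ℕ} (A : Matrix (Fin n) (Fin n) ℝ) (β B : ℝ) (x : Fin n → ℝ) : ℝ :=
  Real.exp (β / 2 * ∑ i, ∑ j, A i j * x i * x j + B * ∑ i, x i)

/-- Probability of the event `E` under the Ising measure `P_{n,β,B}`. -/
def isingProb {n : ℕ} (A : Matrix (Fin n) (Fin n) ℝ) (β B : ℝ) (E : Set (Fin n → ℝ)) : ℝ :=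
  (∑ σ : Fin n → Bool, E.indicator (isingWt A β B) (spinVec n σ)) /
    (∑ σ : Fin n → Bool, isingWt A β B (spinVec n σ))

/-- Expectation of `f` under the Ising measure `P_{n,β,B}`. -/
def isingExp {n : ℕ} (A : Matrix (Fin n) (Fin n) ℝ) (β B : ℝ) (f : (Fin n → ℝ) → ℝ) : ℝ :=
  (∑ σ : Fin n → Bool, f (spinVec n σ) * isingWt A β B (spinVec n σ)) /
    (∑ σ : Fin n → Bool, isingWt A β B (spinVec n σ))

/-- Pseudo-likelihood equation `Q_n(β,B|x)`. -/
def Qfun {n : ℕ} (A : Matrix (Fin n) (Fin n) ℝ) (β B : ℝ) (x : Fin n → ℝ) : ℝ :=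
  ∑ i, mloc A x i * (x i - Real.tanh (β * mloc A x i + B))

/-- Pseudo-likelihood equation `R_n(β,B|x)`. -/
def Rfun {n : ℕ} (A : Matrix (Fin n) (Fin n) ℝ) (β B : ℝ) (x : Fin n → ℝ) : ℝ :=
  ∑ i, (x i - Real.tanh (β * mloc A x i + B))

/-- `b_i(x) = tanh(β m_i(x) + B)`. -/
def bvec {n : ℕ} (A : Matrix (Fin n) (Fin n) ℝ) (β B : ℝ) (x : Fin n → ℝ) : Fin n → ℝ :=
  fun i => Real.tanh (β * mloc A x i + B)

/-- `f_n(y) = (β/2) yᵀAy + B ∑ y_i`. -/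
def fN {n : ℕ} (A : Matrix (Fin n) (Fin n) ℝ) (β B : ℝ) (y : Fin n → ℝ) : ℝ :=
  β / 2 * ∑ i, ∑ j, A i j * y i * y j + B * ∑ i, y i

/-- Entropy term `I(y)` (with `0 log 0 = 0`, as `Real.log 0 = 0`). -/
def entI {n : ℕ} (y : Fin n → ℝ) : ℝ :=
  ∑ i, ((1 + y i) / 2 * Real.log ((1 + y i) / 2) + (1 - y i) / 2 * Real.log ((1 - y i) / 2))

lemma tanh_hasDerivAt (x : ℝ) : HasDerivAt Real.tanh (1 / Real.cosh x ^ 2) x := by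
  have h := (Real.hasDerivAt_sinh x).div (Real.hasDerivAt_cosh x) (Real.cosh_pos x).ne'
  have : Real.tanh = fun y => Real.sinh y / Real.cosh y := funext fun y => Real.tanh_eq_sinh_div_cosh y
  rw [this]
  have := Real.cosh_sq_sub_sinh_sq x
  have e : (1 / Real.cosh x ^ 2) = (Real.cosh x * Real.cosh x - Real.sinh x * Real.sinh x) / Real.cosh x ^ 2 := by
    rw [show Real.cosh x * Real.cosh x - Real.sinh x * Real.sinh x = 1 by nlinarith [Real.cosh_pos x]]
  rw [e]
  exact h

lemma tanh_lipschitz (a b : ℝ) : |Real.tanh a - Real.tanh b| ≤ |a - b| := by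
  have hlip : LipschitzWith 1 Real.tanh := by
    apply lipschitzWith_of_nnnorm_deriv_le (fun x => (tanh_hasDerivAt x).differentiableAt)
    intro x
    have hd : deriv Real.tanh x = 1 / Real.cosh x ^ 2 := (tanh_hasDerivAt x).deriv
    rw [← NNReal.coe_le_coe]
    push_cast
    rw [hd, Real.norm_eq_abs, abs_of_nonneg (by positivity)]
    rw [div_le_one (by positivity)]
    nlinarith [Real.cosh_pos x, Real.one_le_cosh x]
  have := hlip.dist_le_mul a b
  simpa [Real.dist_eq] using this

lemma tanh_abs_le_one (x : ℝ) : |Real.tanh x| ≤ 1 := by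
  rw [Real.tanh_eq_sinh_div_cosh, abs_div, abs_of_pos (Real.cosh_pos x), div_le_one (Real.cosh_pos x)]
  rw [abs_le]
  constructor
  · nlinarith [Real.cosh_add_sinh x, Real.exp_pos x]
  · nlinarith [Real.cosh_sub_sinh x, Real.exp_pos (-x)]


def flipB {n : ℕ} (i : Fin n) (σ : Fin n → Bool) : Fin n → Bool := Function.update σ i (!σ i)

lemma flipB_invol {n : ℕ} (i : Fin n) : Function.Involutive (flipB i) := by
  intro σ; funext j
  by_cases h : j = i
  · subst h; simp [flipB]
  · simp [flipB, Function.update_of_ne h]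

lemma spin_flip {n : ℕ} (i : Fin n) (σ : Fin n → Bool) :
    spinVec n (flipB i σ) = Function.update (spinVec n σ) i (-(spinVec n σ i)) := by
  funext j
  by_cases h : j = i
  · subst h; by_cases hs : σ j <;> simp [spinVec, flipB, hs]
  · simp [spinVec, flipB, Function.update_of_ne h]

lemma spin_abs {n : ℕ} (σ : Fin n → Bool) (i : Fin n) : |spinVec n σ i| ≤ 1 := by
  by_cases hs : σ i <;> simp [spinVec, hs]

lemma mloc_update {n : ℕ} (A : Matrix (Fin n) (Fin n) ℝ) (x : Fin n → ℝ) (i j : Fin n) (t : ℝ) :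
    mloc A (Function.update x i t) j = mloc A x j + A j i * (t - x i) := by
  unfold mloc
  have : ∀ k : Fin n, A j k * Function.update x i t k - A j k * x k
      = if k = i then A j i * (t - x i) else 0 := by
    intro k
    by_cases h : k = i
    · subst h; simp [Function.update_self]; ring
    · simp [Function.update_of_ne h, h]
  have h2 : ∑ k, (A j k * Function.update x i t k - A j k * x k) = A j i * (t - x i) := by
    rw [Finset.sum_congr rfl (fun k _ => this k)]
    simp
  have h3 := Finset.sum_sub_distrib (s := (Finset.univ : Finset (Fin n)))
    (f := fun k => A j k * Function.update x i t k) (g := fun k => A j k * x k)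
  rw [h3] at h2
  linarith

lemma mloc_abs_le {n : ℕ} (A : Matrix (Fin n) (Fin n) ℝ) (hnn : ∀ i j, 0 ≤ A i j)
    (x : Fin n → ℝ) (hx : ∀ j, |x j| ≤ 1) (i : Fin n) : |mloc A x i| ≤ ∑ j, A i j := by
  calc |mloc A x i| ≤ ∑ j, |A i j * x j| := Finset.abs_sum_le_sum_abs _ _
    _ ≤ ∑ j, A i j := by
        apply Finset.sum_le_sum
        intro j _
        rw [abs_mul, abs_of_nonneg (hnn i j)]
        calc A i j * |x j| ≤ A i j * 1 := by
              exact mul_le_mul_of_nonneg_left (hx j) (hnn i j)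
          _ = A i j := mul_one _

lemma quad_eq {n : ℕ} (A : Matrix (Fin n) (Fin n) ℝ) (y : Fin n → ℝ) :
    (∑ i, ∑ j, A i j * y i * y j) = ∑ i, y i * mloc A y i := by
  apply Finset.sum_congr rfl
  intro i _
  rw [mloc, Finset.mul_sum]
  apply Finset.sum_congr rfl
  intro j _
  ring

lemma quad_update {n : ℕ} (A : Matrix (Fin n) (Fin n) ℝ) (hsymm : A.IsSymm)
    (hdiag : ∀ i, A i i = 0) (x : Fin n → ℝ) (i : Fin n) (t : ℝ) :
    (∑ j, ∑ k, A j k * Function.update x i t j * Function.update x i t k)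
      = (∑ j, ∑ k, A j k * x j * x k) + 2 * (t - x i) * mloc A x i := by
  have hAsymm : ∀ j k, A j k = A k j := fun j k => by
    have h := congrFun (congrFun hsymm k) j
    simpa [Matrix.transpose_apply] using h
  set d := t - x i with hd
  set x' := Function.update x i t with hx'
  rw [quad_eq, quad_eq]
  have hm : ∀ j, mloc A x' j = mloc A x j + A j i * d := fun j => mloc_update A x i j t
  have key : ∀ j, x' j * mloc A x' j - x j * mloc A x j
      = x j * A j i * d + (if j = i then d * mloc A x i + A i i * d * d else 0) := by
    intro j
    rw [hm j]
    by_cases h : j = i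
    · subst h
      simp only [hx', Function.update_self, if_pos rfl, if_true, hdiag j]
      ring
    · simp only [hx', Function.update_of_ne h, if_neg h]
      ring
  have hsum : ∑ j, (x' j * mloc A x' j - x j * mloc A x j)
      = ∑ j, (x j * A j i * d) + (d * mloc A x i + A i i * d * d) := by
    rw [Finset.sum_congr rfl (fun j _ => key j), Finset.sum_add_distrib]
    congr 1
    rw [Finset.sum_ite_eq' Finset.univ i (fun _ => d * mloc A x i + A i i * d * d)]
    simp
  have h1 : ∑ j, x j * A j i * d = d * mloc A x i := by
    rw [mloc, Finset.mul_sum]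
    apply Finset.sum_congr rfl
    intro j _
    rw [hAsymm i j]
    ring
  rw [Finset.sum_sub_distrib] at hsum
  rw [h1, hdiag i] at hsum
  linarith

lemma isingWt_update {n : ℕ} (A : Matrix (Fin n) (Fin n) ℝ) (hsymm : A.IsSymm)
    (hdiag : ∀ i, A i i = 0) (β B : ℝ) (x : Fin n → ℝ) (i : Fin n) (t : ℝ) :
    isingWt A β B (Function.update x i t)
      = Real.exp ((β * mloc A x i + B) * (t - x i)) * isingWt A β B x := by
  rw [isingWt, isingWt, ← Real.exp_add]
  congr 1
  rw [quad_update A hsymm hdiag x i t]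
  have hsum : ∑ j, Function.update x i t j = (∑ j, x j) + (t - x i) := by
    rw [Finset.sum_update_of_mem (Finset.mem_univ i)]
    have h4 : ∑ j : Fin n, x j = x i + ∑ j ∈ Finset.univ.erase i, x j :=
      (Finset.add_sum_erase _ _ (Finset.mem_univ i)).symm
    rw [h4, ← Finset.sdiff_singleton_eq_erase]
    ring
  rw [hsum]
  ring

lemma tanh_key (θ : ℝ) (s : ℝ) (hs : s = 1 ∨ s = -1) :
    (-s - Real.tanh θ) * Real.exp (θ * (-s - s)) + (s - Real.tanh θ) = 0 := by
  have he := Real.exp_ne_zero θ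
  rcases hs with h | h <;> subst h
  · have h2 : θ * (-(1:ℝ) - 1) = -(θ + θ) := by ring
    rw [h2, Real.exp_neg, Real.exp_add, Real.tanh_eq_sinh_div_cosh, Real.sinh_eq,
      Real.cosh_eq, Real.exp_neg]
    field_simp
    ring
  · have h2 : θ * (-(-1:ℝ) - -1) = θ + θ := by ring
    rw [h2, Real.exp_add, Real.tanh_eq_sinh_div_cosh, Real.sinh_eq,
      Real.cosh_eq, Real.exp_neg]
    field_simp
    ring

lemma eps_wt_cancel {n : ℕ} (A : Matrix (Fin n) (Fin n) ℝ) (hsymm : A.IsSymm)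
    (hdiag : ∀ i, A i i = 0) (β B : ℝ) (i : Fin n) (σ : Fin n → Bool) :
    (spinVec n (flipB i σ) i - bvec A β B (spinVec n (flipB i σ)) i)
        * isingWt A β B (spinVec n (flipB i σ))
      = -((spinVec n σ i - bvec A β B (spinVec n σ) i) * isingWt A β B (spinVec n σ)) := by
  set x := spinVec n σ with hx
  have hflip : spinVec n (flipB i σ) = Function.update x i (-(x i)) := spin_flip i σ
  rw [hflip, isingWt_update A hsymm hdiag β B x i (-(x i))]
  have hml : mloc A (Function.update x i (-(x i))) i = mloc A x i := by
    rw [mloc_update, hdiag]; ring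
  simp only [bvec, hml, Function.update_self]
  set θ := β * mloc A x i + B with hθ
  set w := isingWt A β B x with hw
  have hs : x i = 1 ∨ x i = -1 := by
    by_cases h : σ i
    · left; simp [hx, spinVec, h]
    · right; simp [hx, spinVec, h]
  have hk := tanh_key θ (x i) hs
  linear_combination w * hk

lemma flip_pair_sum {n : ℕ} (i : Fin n) (ε w G : (Fin n → Bool) → ℝ)
    (hc : ∀ σ, ε (flipB i σ) * w (flipB i σ) = -(ε σ * w σ)) :
    ∑ σ, ε σ * G σ * w σ = (1/2) * ∑ σ, ε σ * w σ * (G σ - G (flipB i σ)) := by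
  have h1 : ∑ σ : Fin n → Bool, ε (flipB i σ) * G (flipB i σ) * w (flipB i σ)
      = ∑ σ : Fin n → Bool, ε σ * G σ * w σ :=
    Fintype.sum_bijective (flipB i) (flipB_invol i).bijective _ _ (fun σ => rfl)
  have h2 : ∀ σ, ε (flipB i σ) * G (flipB i σ) * w (flipB i σ)
      = -(ε σ * w σ * G (flipB i σ)) := by
    intro σ
    have h3 : ε (flipB i σ) * G (flipB i σ) * w (flipB i σ)
        = (ε (flipB i σ) * w (flipB i σ)) * G (flipB i σ) := by ring
    rw [h3, hc σ]; ring
  rw [Finset.sum_congr rfl (fun σ _ => h2 σ)] at h1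
  rw [Finset.sum_neg_distrib] at h1
  have h4 : ∑ σ : Fin n → Bool, ε σ * w σ * (G σ - G (flipB i σ))
      = ∑ σ : Fin n → Bool, ε σ * G σ * w σ
        - ∑ σ : Fin n → Bool, ε σ * w σ * G (flipB i σ) := by
    rw [← Finset.sum_sub_distrib]
    exact Finset.sum_congr rfl (fun σ _ => by ring)
  rw [h4]
  linarith

lemma bilin_symm {n : ℕ} (A : Matrix (Fin n) (Fin n) ℝ) (hsymm : A.IsSymm) (y z : Fin n → ℝ) :
    ∑ i, y i * mloc A z i = ∑ i, z i * mloc A y i := by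
  have hAsymm : ∀ j k, A j k = A k j := fun j k => by
    have h := congrFun (congrFun hsymm k) j
    simpa [Matrix.transpose_apply] using h
  simp only [mloc, Finset.mul_sum]
  rw [Finset.sum_comm]
  apply Finset.sum_congr rfl; intro i _
  apply Finset.sum_congr rfl; intro j _
  rw [hAsymm i j]; ring

lemma fN_diff {n : ℕ} (A : Matrix (Fin n) (Fin n) ℝ) (hsymm : A.IsSymm) (β B : ℝ)
    (y z : Fin n → ℝ) :
    fN A β B y - fN A β B z
      = ∑ i, (β/2 * (mloc A y i + mloc A z i) + B) * (y i - z i) := by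
  have hb := bilin_symm A hsymm y z
  have expand : ∀ i : Fin n, (β/2 * (mloc A y i + mloc A z i) + B) * (y i - z i)
      = β/2 * (y i * mloc A y i) - β/2 * (z i * mloc A z i)
        + β/2 * (y i * mloc A z i) - β/2 * (z i * mloc A y i) + (B * y i - B * z i) := by
    intro i; ring
  rw [Finset.sum_congr rfl (fun i _ => expand i)]
  simp only [Finset.sum_add_distrib, Finset.sum_sub_distrib, ← Finset.mul_sum]
  rw [fN, fN, quad_eq, quad_eq]
  linear_combination (-β/2) * hb

def ccV {n : ℕ} (A : Matrix (Fin n) (Fin n) ℝ) (β B : ℝ) (σ : Fin n → Bool) (i : Fin n) : ℝ :=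
  β/2 * (mloc A (spinVec n σ) i + mloc A (bvec A β B (spinVec n σ)) i) + B

def epsV {n : ℕ} (A : Matrix (Fin n) (Fin n) ℝ) (β B : ℝ) (σ : Fin n → Bool) (i : Fin n) : ℝ :=
  spinVec n σ i - bvec A β B (spinVec n σ) i

def SS {n : ℕ} (A : Matrix (Fin n) (Fin n) ℝ) (β B : ℝ) (σ : Fin n → Bool) : ℝ :=
  ∑ i, ccV A β B σ i * epsV A β B σ i

def KK (β B γ : ℝ) : ℝ := β * γ + |B|

def LL (β B γ : ℝ) : ℝ := 2*(β*γ + β^2*γ^2) + KK β B γ * (2 + 2*β*γ)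

lemma abs_mul_sub (a b c d : ℝ) : |a*b - c*d| ≤ |a - c| * |b| + |c| * |b - d| := by
  have h : a*b - c*d = (a-c)*b + c*(b-d) := by ring
  rw [h]
  exact (abs_add_le _ _).trans (by rw [abs_mul, abs_mul])

section Bounds

variable {n : ℕ} (A : Matrix (Fin n) (Fin n) ℝ) (β B γ : ℝ)

lemma bvec_abs_le_one (x : Fin n → ℝ) (i : Fin n) : |bvec A β B x i| ≤ 1 :=
  tanh_abs_le_one _

lemma epsV_abs_le (σ : Fin n → Bool) (i : Fin n) : |epsV A β B σ i| ≤ 2 := by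
  have h1 := spin_abs σ i
  have h2 := bvec_abs_le_one A β B (spinVec n σ) i
  calc |epsV A β B σ i| ≤ |spinVec n σ i| + |bvec A β B (spinVec n σ) i| := abs_sub _ _
    _ ≤ 2 := by linarith

lemma mloc_spin_le (hnn : ∀ i j, 0 ≤ A i j) (hγ : ∀ i, ∑ j, A i j ≤ γ)
    (σ : Fin n → Bool) (j : Fin n) : |mloc A (spinVec n σ) j| ≤ γ :=
  (mloc_abs_le A hnn _ (spin_abs σ) j).trans (hγ j)

lemma mloc_bvec_le (hnn : ∀ i j, 0 ≤ A i j) (hγ : ∀ i, ∑ j, A i j ≤ γ)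
    (x : Fin n → ℝ) (j : Fin n) : |mloc A (bvec A β B x) j| ≤ γ :=
  (mloc_abs_le A hnn _ (fun k => bvec_abs_le_one A β B x k) j).trans (hγ j)

lemma ccV_abs_le (hβ : 0 < β) (hnn : ∀ i j, 0 ≤ A i j) (hγ : ∀ i, ∑ j, A i j ≤ γ)
    (σ : Fin n → Bool) (i : Fin n) : |ccV A β B σ i| ≤ KK β B γ := by
  have h1 := mloc_spin_le A γ hnn hγ σ i
  have h2 := mloc_bvec_le A β B γ hnn hγ (spinVec n σ) i
  have : |ccV A β B σ i| ≤ |β/2 * (mloc A (spinVec n σ) i + mloc A (bvec A β B (spinVec n σ)) i)| + |B| :=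
    abs_add_le _ _
  rw [abs_mul, abs_div, abs_of_pos hβ] at this
  have h3 : |mloc A (spinVec n σ) i + mloc A (bvec A β B (spinVec n σ)) i| ≤ 2 * γ :=
    (abs_add_le _ _).trans (by linarith)
  have h4 : β / |2| * |mloc A (spinVec n σ) i + mloc A (bvec A β B (spinVec n σ)) i| ≤ β/2 * (2*γ) := by
    rw [show |(2:ℝ)| = 2 by norm_num]
    exact mul_le_mul_of_nonneg_left h3 (by positivity)
  rw [KK]
  nlinarith

lemma SS_abs_le (hβ : 0 < β) (hγ0 : 0 ≤ γ) (hnn : ∀ i j, 0 ≤ A i j)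
    (hγ : ∀ i, ∑ j, A i j ≤ γ) (σ : Fin n → Bool) : |SS A β B σ| ≤ 2 * KK β B γ * n := by
  have hK : 0 ≤ KK β B γ := by rw [KK]; positivity
  calc |SS A β B σ| ≤ ∑ i, |ccV A β B σ i * epsV A β B σ i| := Finset.abs_sum_le_sum_abs _ _
    _ ≤ ∑ _i : Fin n, KK β B γ * 2 := by
        apply Finset.sum_le_sum
        intro i _
        rw [abs_mul]
        exact mul_le_mul (ccV_abs_le A β B γ hβ hnn hγ σ i) (epsV_abs_le A β B σ i)
          (abs_nonneg _) hK
    _ = 2 * KK β B γ * n := by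
        rw [Finset.sum_const, Finset.card_univ, Fintype.card_fin, nsmul_eq_mul]
        ring

lemma spin_flip_diff (i j : Fin n) (σ : Fin n → Bool) :
    |spinVec n (flipB i σ) j - spinVec n σ j| ≤ (if j = i then 2 else 0) := by
  rw [spin_flip]
  by_cases h : j = i
  · subst h
    rw [Function.update_self, if_pos rfl]
    have := spin_abs σ j
    rw [show -spinVec n σ j - spinVec n σ j = -(2 * spinVec n σ j) by ring, abs_neg, abs_mul]
    rw [show |(2:ℝ)| = 2 by norm_num]
    linarith
  · rw [Function.update_of_ne h, if_neg h]
    simp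

lemma mloc_flip_diff (hnn : ∀ i j, 0 ≤ A i j) (i j : Fin n) (σ : Fin n → Bool) :
    |mloc A (spinVec n (flipB i σ)) j - mloc A (spinVec n σ) j| ≤ 2 * A j i := by
  rw [spin_flip, mloc_update]
  rw [show mloc A (spinVec n σ) j + A j i * (-spinVec n σ i - spinVec n σ i)
      - mloc A (spinVec n σ) j = A j i * (-(2 * spinVec n σ i)) by ring]
  rw [abs_mul, abs_neg, abs_mul, abs_of_nonneg (hnn j i), show |(2:ℝ)| = 2 by norm_num]
  have := spin_abs σ i
  nlinarith [hnn j i]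

lemma bvec_flip_diff (hβ : 0 < β) (hnn : ∀ i j, 0 ≤ A i j) (i j : Fin n) (σ : Fin n → Bool) :
    |bvec A β B (spinVec n (flipB i σ)) j - bvec A β B (spinVec n σ) j| ≤ 2 * β * A j i := by
  rw [bvec, bvec]
  calc |Real.tanh (β * mloc A (spinVec n (flipB i σ)) j + B)
        - Real.tanh (β * mloc A (spinVec n σ) j + B)|
      ≤ |(β * mloc A (spinVec n (flipB i σ)) j + B) - (β * mloc A (spinVec n σ) j + B)| :=
        tanh_lipschitz _ _
    _ = β * |mloc A (spinVec n (flipB i σ)) j - mloc A (spinVec n σ) j| := by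
        rw [show (β * mloc A (spinVec n (flipB i σ)) j + B) - (β * mloc A (spinVec n σ) j + B)
          = β * (mloc A (spinVec n (flipB i σ)) j - mloc A (spinVec n σ) j) by ring,
          abs_mul, abs_of_pos hβ]
    _ ≤ β * (2 * A j i) := mul_le_mul_of_nonneg_left (mloc_flip_diff A hnn i j σ) hβ.le
    _ = 2 * β * A j i := by ring

lemma mloc_bvec_flip_diff (hβ : 0 < β) (hnn : ∀ i j, 0 ≤ A i j) (i j : Fin n) (σ : Fin n → Bool) :
    |mloc A (bvec A β B (spinVec n (flipB i σ))) j - mloc A (bvec A β B (spinVec n σ)) j|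
      ≤ 2 * β * ∑ k, A j k * A k i := by
  rw [mloc, mloc, ← Finset.sum_sub_distrib]
  calc |∑ k, (A j k * bvec A β B (spinVec n (flipB i σ)) k - A j k * bvec A β B (spinVec n σ) k)|
      ≤ ∑ k, |A j k * (bvec A β B (spinVec n (flipB i σ)) k - bvec A β B (spinVec n σ) k)| := by
        rw [show (fun k => A j k * bvec A β B (spinVec n (flipB i σ)) k
            - A j k * bvec A β B (spinVec n σ) k)
          = fun k => A j k * (bvec A β B (spinVec n (flipB i σ)) k - bvec A β B (spinVec n σ) k) by
            funext k; ring]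
        exact Finset.abs_sum_le_sum_abs _ _
    _ ≤ ∑ k, A j k * (2 * β * A k i) := by
        apply Finset.sum_le_sum
        intro k _
        rw [abs_mul, abs_of_nonneg (hnn j k)]
        exact mul_le_mul_of_nonneg_left (bvec_flip_diff A β B hβ hnn i k σ) (hnn j k)
    _ = 2 * β * ∑ k, A j k * A k i := by
        rw [Finset.mul_sum]
        exact Finset.sum_congr rfl (fun k _ => by ring)

lemma ccV_flip_diff (hβ : 0 < β) (hnn : ∀ i j, 0 ≤ A i j) (i j : Fin n) (σ : Fin n → Bool) :
    |ccV A β B (flipB i σ) j - ccV A β B σ j|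
      ≤ β * A j i + β^2 * ∑ k, A j k * A k i := by
  rw [ccV, ccV]
  have h1 := mloc_flip_diff A hnn i j σ
  have h2 := mloc_bvec_flip_diff A β B hβ hnn i j σ
  have key : (β/2 * (mloc A (spinVec n (flipB i σ)) j + mloc A (bvec A β B (spinVec n (flipB i σ))) j) + B)
      - (β/2 * (mloc A (spinVec n σ) j + mloc A (bvec A β B (spinVec n σ)) j) + B)
    = β/2 * (mloc A (spinVec n (flipB i σ)) j - mloc A (spinVec n σ) j)
      + β/2 * (mloc A (bvec A β B (spinVec n (flipB i σ))) j - mloc A (bvec A β B (spinVec n σ)) j) := by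
    ring
  rw [key]
  calc |β/2 * (mloc A (spinVec n (flipB i σ)) j - mloc A (spinVec n σ) j)
      + β/2 * (mloc A (bvec A β B (spinVec n (flipB i σ))) j - mloc A (bvec A β B (spinVec n σ)) j)|
      ≤ |β/2| * |mloc A (spinVec n (flipB i σ)) j - mloc A (spinVec n σ) j|
        + |β/2| * |mloc A (bvec A β B (spinVec n (flipB i σ))) j - mloc A (bvec A β B (spinVec n σ)) j| := by
        refine (abs_add_le _ _).trans ?_
        rw [abs_mul, abs_mul]
    _ ≤ β/2 * (2 * A j i) + β/2 * (2 * β * ∑ k, A j k * A k i) := by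
        rw [abs_of_pos (by positivity : (0:ℝ) < β/2)]
        have hb2 : (0:ℝ) ≤ β/2 := by positivity
        exact add_le_add (mul_le_mul_of_nonneg_left h1 hb2) (mul_le_mul_of_nonneg_left h2 hb2)
    _ = β * A j i + β^2 * ∑ k, A j k * A k i := by ring

lemma epsV_flip_diff (hβ : 0 < β) (hnn : ∀ i j, 0 ≤ A i j) (i j : Fin n) (σ : Fin n → Bool) :
    |epsV A β B (flipB i σ) j - epsV A β B σ j|
      ≤ (if j = i then 2 else 0) + 2 * β * A j i := by
  rw [epsV, epsV]
  have key : spinVec n (flipB i σ) j - bvec A β B (spinVec n (flipB i σ)) j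
      - (spinVec n σ j - bvec A β B (spinVec n σ) j)
    = (spinVec n (flipB i σ) j - spinVec n σ j)
      - (bvec A β B (spinVec n (flipB i σ)) j - bvec A β B (spinVec n σ) j) := by ring
  rw [key]
  refine (abs_sub _ _).trans ?_
  exact add_le_add (spin_flip_diff i j σ) (bvec_flip_diff A β B hβ hnn i j σ)

lemma colsum_le (hsymm : A.IsSymm) (hγ : ∀ i, ∑ j, A i j ≤ γ) (i : Fin n) :
    ∑ j, A j i ≤ γ := by
  have hAsymm : ∀ j k, A j k = A k j := fun j k => by
    have h := congrFun (congrFun hsymm k) j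
    simpa [Matrix.transpose_apply] using h
  calc ∑ j, A j i = ∑ j, A i j := Finset.sum_congr rfl (fun j _ => hAsymm j i)
    _ ≤ γ := hγ i

lemma doublesum_le (hsymm : A.IsSymm) (hnn : ∀ i j, 0 ≤ A i j) (hγ0 : 0 ≤ γ)
    (hγ : ∀ i, ∑ j, A i j ≤ γ) (i : Fin n) :
    ∑ j, ∑ k, A j k * A k i ≤ γ^2 := by
  rw [Finset.sum_comm]
  calc ∑ k, ∑ j, A j k * A k i = ∑ k, (∑ j, A j k) * A k i := by
        exact Finset.sum_congr rfl (fun k _ => by rw [Finset.sum_mul])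
    _ ≤ ∑ k, γ * A k i := by
        apply Finset.sum_le_sum
        intro k _
        exact mul_le_mul_of_nonneg_right (colsum_le A γ hsymm hγ k) (hnn k i)
    _ = γ * ∑ k, A k i := by rw [Finset.mul_sum]
    _ ≤ γ * γ := mul_le_mul_of_nonneg_left (colsum_le A γ hsymm hγ i) hγ0
    _ = γ^2 := by ring

lemma SS_flip_diff (hβ : 0 < β) (hγ0 : 0 ≤ γ) (hsymm : A.IsSymm) (hnn : ∀ i j, 0 ≤ A i j)
    (hγ : ∀ i, ∑ j, A i j ≤ γ) (i : Fin n) (σ : Fin n → Bool) :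
    |SS A β B (flipB i σ) - SS A β B σ| ≤ LL β B γ := by
  have hK : 0 ≤ KK β B γ := by rw [KK]; positivity
  rw [SS, SS, ← Finset.sum_sub_distrib]
  have step1 : |∑ j, (ccV A β B (flipB i σ) j * epsV A β B (flipB i σ) j
        - ccV A β B σ j * epsV A β B σ j)|
      ≤ ∑ j, ((β * A j i + β^2 * ∑ k, A j k * A k i) * 2
          + KK β B γ * ((if j = i then 2 else 0) + 2 * β * A j i)) := by
    refine (Finset.abs_sum_le_sum_abs _ _).trans ?_
    apply Finset.sum_le_sum
    intro j _
    refine (abs_mul_sub _ _ _ _).trans ?_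
    have h1 := ccV_flip_diff A β B hβ hnn i j σ
    have h2 := epsV_abs_le A β B (flipB i σ) j
    have h3 := ccV_abs_le A β B γ hβ hnn hγ σ j
    have h4 := epsV_flip_diff A β B hβ hnn i j σ
    have hnn2 : (0:ℝ) ≤ |epsV A β B (flipB i σ) j| := abs_nonneg _
    have hnn3 : (0:ℝ) ≤ |ccV A β B σ j| := abs_nonneg _
    have t1 : |ccV A β B (flipB i σ) j - ccV A β B σ j| * |epsV A β B (flipB i σ) j|
        ≤ (β * A j i + β^2 * ∑ k, A j k * A k i) * 2 :=
      mul_le_mul h1 h2 hnn2 (le_trans (abs_nonneg _) h1)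
    have t2 : |ccV A β B σ j| * |epsV A β B (flipB i σ) j - epsV A β B σ j|
        ≤ KK β B γ * ((if j = i then 2 else 0) + 2 * β * A j i) :=
      mul_le_mul h3 h4 (abs_nonneg _) hK
    linarith
  refine step1.trans ?_
  have point : ∀ j : Fin n, ((β * A j i + β^2 * ∑ k, A j k * A k i) * 2
        + KK β B γ * ((if j = i then 2 else 0) + 2 * β * A j i))
      = 2 * β * A j i + 2 * β^2 * (∑ k, A j k * A k i)
        + (if j = i then KK β B γ * 2 else 0) + 2 * β * KK β B γ * A j i := by
    intro j
    by_cases h : j = i <;> simp only [h, if_pos, if_neg, if_true, if_false] <;> ring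
  rw [Finset.sum_congr rfl (fun j _ => point j)]
  simp only [Finset.sum_add_distrib]
  rw [Finset.sum_ite_eq' Finset.univ i (fun _ => KK β B γ * 2)]
  simp only [Finset.mem_univ, if_pos]
  have e1 : ∑ j, 2 * β * A j i = 2 * β * ∑ j, A j i := by
    rw [Finset.mul_sum]
  have e2 : ∑ j : Fin n, 2 * β^2 * (∑ k, A j k * A k i) = 2 * β^2 * ∑ j, ∑ k, A j k * A k i := by
    rw [Finset.mul_sum]
  have e4 : ∑ j, 2 * β * KK β B γ * A j i = 2 * β * KK β B γ * ∑ j, A j i := by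
    rw [Finset.mul_sum]
  rw [e1, e2, e4]
  have hc := colsum_le A γ hsymm hγ i
  have hd := doublesum_le A γ hsymm hnn hγ0 hγ i
  have hK : 0 ≤ KK β B γ := by rw [KK]; positivity
  have b1 : 2 * β * ∑ j, A j i ≤ 2 * β * γ :=
    mul_le_mul_of_nonneg_left hc (by positivity)
  have b2 : 2 * β^2 * ∑ j, ∑ k, A j k * A k i ≤ 2 * β^2 * γ^2 :=
    mul_le_mul_of_nonneg_left hd (by positivity)
  have b4 : 2 * β * KK β B γ * ∑ j, A j i ≤ 2 * β * KK β B γ * γ :=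
    mul_le_mul_of_nonneg_left hc (by positivity)
  rw [LL, KK] at *
  nlinarith

lemma G_flip_diff (hβ : 0 < β) (hγ0 : 0 ≤ γ) (hsymm : A.IsSymm) (hnn : ∀ i j, 0 ≤ A i j)
    (hdiag : ∀ i, A i i = 0) (hγ : ∀ i, ∑ j, A i j ≤ γ) (i : Fin n) (σ : Fin n → Bool) :
    |ccV A β B (flipB i σ) i * SS A β B (flipB i σ) - ccV A β B σ i * SS A β B σ|
      ≤ 2 * KK β B γ * n * β^2 * (∑ k, A i k ^ 2) + KK β B γ * LL β B γ := by
  have hAsymm : ∀ j k, A j k = A k j := fun j k => by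
    have h := congrFun (congrFun hsymm k) j
    simpa [Matrix.transpose_apply] using h
  have hsq : ∑ k, A i k * A k i = ∑ k, A i k ^ 2 := by
    apply Finset.sum_congr rfl
    intro k _
    rw [← hAsymm i k]; ring
  have h1 : |ccV A β B (flipB i σ) i - ccV A β B σ i| ≤ β^2 * ∑ k, A i k ^ 2 := by
    have := ccV_flip_diff A β B hβ hnn i i σ
    rw [hdiag i, hsq] at this
    linarith
  have h2 := SS_abs_le A β B γ hβ hγ0 hnn hγ (flipB i σ)
  have h3 := ccV_abs_le A β B γ hβ hnn hγ σ i
  have h4 := SS_flip_diff A β B γ hβ hγ0 hsymm hnn hγ i σ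
  have hK : 0 ≤ KK β B γ := by rw [KK]; positivity
  refine (abs_mul_sub _ _ _ _).trans ?_
  have t1 : |ccV A β B (flipB i σ) i - ccV A β B σ i| * |SS A β B (flipB i σ)|
      ≤ (β^2 * ∑ k, A i k ^ 2) * (2 * KK β B γ * n) :=
    mul_le_mul h1 h2 (abs_nonneg _) (le_trans (abs_nonneg _) h1)
  have t2 : |ccV A β B σ i| * |SS A β B (flipB i σ) - SS A β B σ|
      ≤ KK β B γ * LL β B γ :=
    mul_le_mul h3 h4 (abs_nonneg _) hK
  nlinarith [t1, t2]

end Bounds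

lemma core_bound {n : ℕ} (A : Matrix (Fin n) (Fin n) ℝ) (hsymm : A.IsSymm)
    (hnn : ∀ i j, 0 ≤ A i j) (hdiag : ∀ i, A i i = 0) (β B γ : ℝ)
    (hβ : 0 < β) (hγ0 : 0 ≤ γ) (hγ : ∀ i, ∑ j, A i j ≤ γ) :
    isingExp A β B (fun x => (fN A β B x - fN A β B (bvec A β B x))^2)
      ≤ (2 * KK β B γ * β^2 * n) * (∑ i, ∑ j, A i j ^ 2) + n * (KK β B γ * LL β B γ) := by
  set K := KK β B γ with hKdef
  set L := LL β B γ with hLdef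
  have hK : 0 ≤ K := by rw [hKdef, KK]; positivity
  have hL : 0 ≤ L := by
    rw [hLdef, LL, ← hKdef]; positivity
  set w : (Fin n → Bool) → ℝ := fun σ => isingWt A β B (spinVec n σ) with hwdef
  have hw : ∀ σ, 0 < w σ := fun σ => Real.exp_pos _
  set Z : ℝ := ∑ σ : Fin n → Bool, w σ with hZdef
  have hZ : 0 < Z := Finset.sum_pos (fun σ _ => hw σ) Finset.univ_nonempty
  have hfS : ∀ σ : Fin n → Bool,
      fN A β B (spinVec n σ) - fN A β B (bvec A β B (spinVec n σ)) = SS A β B σ := by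
    intro σ
    rw [fN_diff A hsymm β B]
    simp only [SS, ccV, epsV]
  have hgoal : isingExp A β B (fun x => (fN A β B x - fN A β B (bvec A β B x))^2)
      = (∑ σ : Fin n → Bool, (SS A β B σ)^2 * w σ) / Z := by
    rw [isingExp, hZdef]
    congr 1
    exact Finset.sum_congr rfl (fun σ _ => by rw [hfS σ])
  rw [hgoal, div_le_iff₀ hZ]
  set D : Fin n → ℝ := fun i => 2 * K * n * β^2 * (∑ k, A i k ^ 2) + K * L with hDdef
  have hDnn : ∀ i, 0 ≤ D i := by
    intro i
    rw [hDdef]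
    have : (0:ℝ) ≤ ∑ k, A i k ^ 2 := Finset.sum_nonneg (fun k _ => sq_nonneg _)
    positivity
  have key : ∀ i : Fin n,
      ∑ σ : Fin n → Bool, epsV A β B σ i * (ccV A β B σ i * SS A β B σ) * w σ ≤ D i * Z := by
    intro i
    have hc : ∀ σ : Fin n → Bool,
        epsV A β B (flipB i σ) i * w (flipB i σ) = -(epsV A β B σ i * w σ) := by
      intro σ
      exact eps_wt_cancel A hsymm hdiag β B i σ
    rw [flip_pair_sum i (fun σ => epsV A β B σ i) w
      (fun σ => ccV A β B σ i * SS A β B σ) hc]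
    have hterm : ∀ σ : Fin n → Bool,
        epsV A β B σ i * w σ * (ccV A β B σ i * SS A β B σ
          - ccV A β B (flipB i σ) i * SS A β B (flipB i σ)) ≤ 2 * D i * w σ := by
      intro σ
      have habs : |epsV A β B σ i * w σ * (ccV A β B σ i * SS A β B σ
          - ccV A β B (flipB i σ) i * SS A β B (flipB i σ))|
          = |epsV A β B σ i| * w σ * |ccV A β B σ i * SS A β B σ
            - ccV A β B (flipB i σ) i * SS A β B (flipB i σ)| := by
        rw [abs_mul, abs_mul, abs_of_pos (hw σ)]
      have h1 := epsV_abs_le A β B σ i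
      have h2 : |ccV A β B σ i * SS A β B σ
          - ccV A β B (flipB i σ) i * SS A β B (flipB i σ)| ≤ D i := by
        rw [abs_sub_comm, hDdef]
        exact G_flip_diff A β B γ hβ hγ0 hsymm hnn hdiag hγ i σ
      refine (le_abs_self _).trans ?_
      rw [habs]
      have hD := hDnn i
      have s1 : |epsV A β B σ i| * w σ ≤ 2 * w σ :=
        mul_le_mul_of_nonneg_right h1 (hw σ).le
      have s2 : |epsV A β B σ i| * w σ * |ccV A β B σ i * SS A β B σ
          - ccV A β B (flipB i σ) i * SS A β B (flipB i σ)| ≤ 2 * w σ * |ccV A β B σ i * SS A β B σ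
          - ccV A β B (flipB i σ) i * SS A β B (flipB i σ)| :=
        mul_le_mul_of_nonneg_right s1 (abs_nonneg _)
      have s3 : 2 * w σ * |ccV A β B σ i * SS A β B σ
          - ccV A β B (flipB i σ) i * SS A β B (flipB i σ)| ≤ 2 * w σ * D i :=
        mul_le_mul_of_nonneg_left h2 (by have := (hw σ).le; linarith)
      nlinarith [s2, s3]
    calc (1:ℝ)/2 * ∑ σ : Fin n → Bool, epsV A β B σ i * w σ * (ccV A β B σ i * SS A β B σ
          - ccV A β B (flipB i σ) i * SS A β B (flipB i σ))
        ≤ (1:ℝ)/2 * ∑ σ : Fin n → Bool, 2 * D i * w σ := by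
          have := Finset.sum_le_sum (s := (Finset.univ : Finset (Fin n → Bool))) (fun σ _ => hterm σ)
          linarith
      _ = D i * Z := by
          rw [← Finset.mul_sum, ← hZdef]
          ring
  have hN : ∑ σ : Fin n → Bool, (SS A β B σ)^2 * w σ
      = ∑ i : Fin n, ∑ σ : Fin n → Bool,
          epsV A β B σ i * (ccV A β B σ i * SS A β B σ) * w σ := by
    rw [Finset.sum_comm]
    apply Finset.sum_congr rfl
    intro σ _
    have h5 : ∑ i : Fin n, epsV A β B σ i * (ccV A β B σ i * SS A β B σ) * w σ
        = (∑ i : Fin n, ccV A β B σ i * epsV A β B σ i) * (SS A β B σ * w σ) := by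
      rw [Finset.sum_mul]
      exact Finset.sum_congr rfl (fun i _ => by ring)
    rw [h5, show (∑ i : Fin n, ccV A β B σ i * epsV A β B σ i) = SS A β B σ from rfl]
    ring
  calc ∑ σ : Fin n → Bool, (SS A β B σ)^2 * w σ
      = ∑ i : Fin n, ∑ σ : Fin n → Bool,
          epsV A β B σ i * (ccV A β B σ i * SS A β B σ) * w σ := hN
    _ ≤ ∑ i : Fin n, D i * Z := Finset.sum_le_sum (fun i _ => key i)
    _ = (∑ i : Fin n, D i) * Z := (Finset.sum_mul _ _ _).symm
    _ = ((2 * K * β^2 * n) * (∑ i, ∑ j, A i j ^ 2) + n * (K * L)) * Z := by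
        congr 1
        rw [hDdef]
        simp only [Finset.sum_add_distrib, Finset.sum_const, Finset.card_univ,
          Fintype.card_fin, nsmul_eq_mul]
        rw [← Finset.mul_sum]
        ring

lemma isingExp_nonneg {n : ℕ} (A : Matrix (Fin n) (Fin n) ℝ) (β B : ℝ)
    (f : (Fin n → ℝ) → ℝ) (hf : ∀ x, 0 ≤ f x) : 0 ≤ isingExp A β B f := by
  apply div_nonneg
  · exact Finset.sum_nonneg (fun σ _ => mul_nonneg (hf _) (Real.exp_pos _).le)
  · exact Finset.sum_nonneg (fun σ _ => (Real.exp_pos _).le)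


/-- `limsup (1/n²) E[(f_n(X) - f_n(b(X)))²] = 0`. -/
theorem stmt11 (A : (n : ℕ) → Matrix (Fin n) (Fin n) ℝ)
    (hsymm : ∀ n, (A n).IsSymm)
    (hnonneg : ∀ n, ∀ i j : Fin n, 0 ≤ A n i j)
    (hdiag : ∀ n, ∀ i : Fin n, A n i i = 0)
    (hBD : ∃ γ : ℝ, ∀ n, ∀ i : Fin n, (∑ j, A n i j) ≤ γ)
    (hMF : Tendsto (fun n : ℕ => (1 / (n : ℝ)) * ∑ i, ∑ j, (A n i j) ^ 2) atTop (nhds 0))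
    (β B : ℝ) (hβ : 0 < β) (hB : B ≠ 0) :
    limsup (fun n : ℕ => (1 / (n : ℝ) ^ 2) * isingExp (A n) β B
      (fun x => (fN (A n) β B x - fN (A n) β B (bvec (A n) β B x)) ^ 2)) atTop = 0 := by
  obtain ⟨γ₀, hγ₀⟩ := hBD
  set γ := max γ₀ 0 with hγdef
  have hγ0 : 0 ≤ γ := le_max_right _ _
  have hγ : ∀ n, ∀ i : Fin n, (∑ j, A n i j) ≤ γ :=
    fun n i => (hγ₀ n i).trans (le_max_left _ _)
  set K := KK β B γ with hKdef
  set L := LL β B γ with hLdef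
  have hK : 0 ≤ K := by rw [hKdef, KK]; positivity
  have hL : 0 ≤ L := by rw [hLdef, LL, ← hKdef]; positivity
  set u : ℕ → ℝ := fun n => (1 / (n : ℝ) ^ 2) * isingExp (A n) β B
      (fun x => (fN (A n) β B x - fN (A n) β B (bvec (A n) β B x)) ^ 2) with hudef
  set g : ℕ → ℝ := fun n => (2 * K * β^2) * ((1 / (n : ℝ)) * ∑ i, ∑ j, (A n i j) ^ 2)
      + (K * L) * (1 / (n : ℝ)) with hgdef
  have hu0 : ∀ n, 0 ≤ u n := by
    intro n
    apply mul_nonneg (by positivity)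
    exact isingExp_nonneg _ _ _ _ (fun x => sq_nonneg _)
  have hub : ∀ n, u n ≤ g n := by
    intro n
    rcases Nat.eq_zero_or_pos n with hn | hn
    · subst hn
      simp [hudef, hgdef]
    · have hnR : (0:ℝ) < n := by exact_mod_cast hn
      have hcore := core_bound (A n) (hsymm n) (hnonneg n) (hdiag n) β B γ hβ hγ0 (hγ n)
      have h2 : u n ≤ (1 / (n : ℝ) ^ 2) * ((2 * K * β^2 * n) * (∑ i, ∑ j, (A n i j) ^ 2)
          + n * (K * L)) := by
        rw [hudef]
        exact mul_le_mul_of_nonneg_left hcore (by positivity)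
      refine h2.trans ?_
      rw [hgdef]
      have hne : (n:ℝ) ≠ 0 := hnR.ne'
      have heq : (1 / (n : ℝ) ^ 2) * ((2 * K * β^2 * n) * (∑ i, ∑ j, (A n i j) ^ 2)
            + n * (K * L))
          = (2 * K * β^2) * ((1 / (n : ℝ)) * ∑ i, ∑ j, (A n i j) ^ 2)
            + (K * L) * (1 / (n : ℝ)) := by
        field_simp
      exact le_of_eq heq
  have hg : Tendsto g atTop (nhds 0) := by
    rw [hgdef]
    have h1 : Tendsto (fun n : ℕ => (2 * K * β^2)
        * ((1 / (n : ℝ)) * ∑ i, ∑ j, (A n i j) ^ 2)) atTop (nhds ((2 * K * β^2) * 0)) :=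
      hMF.const_mul _
    have h2 : Tendsto (fun n : ℕ => (K * L) * (1 / (n : ℝ))) atTop (nhds ((K * L) * 0)) :=
      tendsto_one_div_atTop_nhds_zero_nat.const_mul _
    have := h1.add h2
    simpa using this
  have hu : Tendsto u atTop (nhds 0) := squeeze_zero hu0 hub hg
  exact hu.limsup_eq
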